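/- Let L and H be restricted Lie algebras over a field of characteristic p > 0 and suppose φ : u(L) → u(H) is an algebra isomorphism. Then the map η : L → u(H) defined by η(x) = φ(x) − ε_H(φ(x))·1 is a restricted Lie algebra homomorphism, and its extension to an algebra homomorphism u(L) → u(H) is an isomorphism mapping ω(L) onto ω(H). -/

import Mathlib

open UniversalEnvelopingAlgebra
open scoped TensorProduct

attribute [local instance 100] LieRing.ofAssociativeRing

/-! Infrastructure: restricted Lie algebras and their restricted enveloping algebras
(not yet in Mathlib). -/

section Restricted

variable (F : Type*) [Field F] (p : ℕ) (L : Type*) [LieRing L] [LieAlgebra F L]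

/-- The element `ad(λ·x + y)^{p-1}(x)` of `F[λ] ⊗ L`, whose `λ^{i-1}`-coefficient is
`i·sᵢ(x,y)`. -/
noncomputable def adLambdaPow (x y : L) : Polynomial F ⊗[F] L :=
  ((LieAlgebra.ad (Polynomial F) (Polynomial F ⊗[F] L)
      (Polynomial.X ⊗ₜ[F] x + 1 ⊗ₜ[F] y)) ^ (p - 1)) (1 ⊗ₜ[F] x)

/-- Extraction of the coefficient of `λ^i` from an element of `F[λ] ⊗ L`. -/
noncomputable def lamCoeff (i : ℕ) : Polynomial F ⊗[F] L →ₗ[F] L :=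
  (TensorProduct.lid F L).toLinearMap ∘ₗ LinearMap.rTensor L (Polynomial.lcoeff F i)

/-- The element `sᵢ(x,y)`, defined by: `i·sᵢ(x,y)` is the coefficient of `λ^{i-1}` in
`ad(λ·x + y)^{p-1}(x)`. -/
noncomputable def sElt (i : ℕ) (x y : L) : L :=
  ((i : F)⁻¹) • lamCoeff F L (i - 1) (adLambdaPow F p L x y)

/-- A `[p]`-mapping on the Lie algebra `L`, making `(L, [p])` a restricted Lie algebra:
(1) `ad(x^{[p]}) = (ad x)^p`; (2) `(α·x)^{[p]} = α^p·x^{[p]}`;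
(3) `(x+y)^{[p]} = x^{[p]} + y^{[p]} + Σ_{i=1}^{p-1} sᵢ(x,y)`. -/
structure PMapOn where
  toFun : L → L
  ad_pow : ∀ x : L, LieAlgebra.ad F L (toFun x) = (LieAlgebra.ad F L x) ^ p
  smul_pow : ∀ (a : F) (x : L), toFun (a • x) = a ^ p • toFun x
  add_pow : ∀ x y : L, toFun (x + y) =
    toFun x + toFun y + ∑ i ∈ Finset.Icc 1 (p - 1), sElt F p L i x y

variable {F p L} (pm : PMapOn F p L)

/-- The relation `x^{[p]} ∼ x^p` on `U(L)` whose quotient is the restricted enveloping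
algebra `u(L)`. -/
def uRel (a b : UniversalEnvelopingAlgebra F L) : Prop :=
  ∃ x : L, a = ι F (pm.toFun x) ∧ b = (ι F x) ^ p

/-- The restricted enveloping algebra `u(L) = U(L)/(x^{[p]} - x^p)`. -/
def uEnv := RingQuot (uRel pm)

noncomputable instance : Ring (uEnv pm) := inferInstanceAs (Ring (RingQuot (uRel pm)))
noncomputable instance : Algebra F (uEnv pm) :=
  inferInstanceAs (Algebra F (RingQuot (uRel pm)))

/-- The canonical map `L → u(L)` (injective by Jacobson's PBW theorem). -/
noncomputable def uIota : L →ₗ[F] uEnv pm :=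
  (RingQuot.mkAlgHom F (uRel pm)).toLinearMap ∘ₗ (ι F : L →ₗ⁅F⁆ _).toLinearMap

/-- The augmentation map `u(L) → F`. -/
noncomputable def uAug (hp : p ≠ 0) : uEnv pm →ₐ[F] F :=
  RingQuot.liftAlgHom F
    ⟨UniversalEnvelopingAlgebra.lift F (0 : L →ₗ⁅F⁆ F), by
      rintro a b ⟨x, rfl, rfl⟩
      simp [UniversalEnvelopingAlgebra.lift_ι_apply, zero_pow hp]⟩

/-- The augmentation ideal `ω(L)` of `u(L)`. -/
noncomputable def uAugIdeal (hp : p ≠ 0) : Submodule F (uEnv pm) :=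
  LinearMap.ker (uAug pm hp).toLinearMap

/-- The `n`-th dimension subalgebra `D_n(L) = L ∩ ω(L)^n`. -/
noncomputable def dimSubalgebra (hp : p ≠ 0) (n : ℕ) : Submodule F L :=
  Submodule.comap (uIota pm) (uAugIdeal pm hp ^ n)

/-- The restricted subalgebra of `L` generated by a subset `X`: the smallest `F`-submodule
containing `X` that is closed under the Lie bracket and under the `p`-map. -/
def restrictedSpan (X : Set L) : Submodule F L :=
  sInf {S : Submodule F L | X ⊆ S ∧ (∀ a ∈ S, ∀ b ∈ S, ⁅a, b⁆ ∈ S) ∧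
    ∀ a ∈ S, pm.toFun a ∈ S}

end Restricted

section AuxLemmas

variable {F : Type*} [Field F] {p : ℕ} {L : Type*} [LieRing L] [LieAlgebra F L]
variable (pm : PMapOn F p L)

lemma uAug_algebraMap (hp : p ≠ 0) (a : F) :
    uAug pm hp (algebraMap F (uEnv pm) a) = a :=
  (uAug pm hp).commutes a

lemma uEnv_algebraMap_injective (hp : p ≠ 0) :
    Function.Injective (algebraMap F (uEnv pm)) := fun a b h => by
  simpa [uAug_algebraMap pm hp] using congrArg (uAug pm hp) h

lemma uEnv_charP [Fact p.Prime] [CharP F p] : CharP (uEnv pm) p :=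
  charP_of_injective_algebraMap
    (uEnv_algebraMap_injective pm (Fact.out : p.Prime).ne_zero) p

lemma uIota_bracket (x y : L) :
    uIota pm ⁅x, y⁆ = uIota pm x * uIota pm y - uIota pm y * uIota pm x := by
  show RingQuot.mkAlgHom F (uRel pm) (ι F ⁅x, y⁆) = _
  rw [LieHom.map_lie, LieRing.of_associative_ring_bracket, map_sub, map_mul, map_mul]
  rfl

lemma uIota_pmap (x : L) : uIota pm (pm.toFun x) = (uIota pm x) ^ p := by
  show RingQuot.mkAlgHom F (uRel pm) (ι F (pm.toFun x)) = _
  rw [RingQuot.mkAlgHom_rel F (⟨x, rfl, rfl⟩ : uRel pm _ _), map_pow]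
  rfl

lemma uAug_uIota (hp : p ≠ 0) (x : L) : uAug pm hp (uIota pm x) = 0 := by
  show RingQuot.liftAlgHom F _ (RingQuot.mkAlgHom F (uRel pm) (ι F x)) = 0
  rw [RingQuot.liftAlgHom_mkAlgHom_apply, UniversalEnvelopingAlgebra.lift_ι_apply]
  rfl

lemma uEnv_algHom_ext {B : Type*} [Ring B] [Algebra F B] {f g : uEnv pm →ₐ[F] B}
    (h : ∀ x : L, f (uIota pm x) = g (uIota pm x)) : f = g := by
  apply RingQuot.ringQuot_ext'
  apply UniversalEnvelopingAlgebra.hom_ext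
  ext x
  exact h x

variable [Fact p.Prime] [CharP F p]

/-- The Lie algebra homomorphism `x ↦ ι x + d(x)·1` for a linear functional `d`
vanishing on brackets. -/
noncomputable def transLie (d : L →ₗ[F] F) (hbr : ∀ x y : L, d ⁅x, y⁆ = 0) :
    L →ₗ⁅F⁆ uEnv pm where
  toFun x := uIota pm x + algebraMap F (uEnv pm) (d x)
  map_add' x y := by simp only [map_add]; abel
  map_smul' a x := by
    simp only [map_smul, RingHom.id_apply, smul_add, Algebra.algebraMap_eq_smul_one,
      smul_assoc, smul_eq_mul, mul_smul]
  map_lie' {x y} := by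
    show uIota pm ⁅x, y⁆ + algebraMap F (uEnv pm) (d ⁅x, y⁆) =
      ⁅uIota pm x + algebraMap F (uEnv pm) (d x), uIota pm y + algebraMap F (uEnv pm) (d y)⁆
    rw [hbr, map_zero, add_zero, uIota_bracket, LieRing.of_associative_ring_bracket]
    simp only [add_mul, mul_add]
    rw [Algebra.commutes (d x) (uIota pm y), Algebra.commutes (d y) (uIota pm x),
      Algebra.commutes (d x) (algebraMap F (uEnv pm) (d y))]
    abel

/-- The translation endomorphism of `u(L)` determined by `d`. -/
noncomputable def transHom (d : L →ₗ[F] F) (hbr : ∀ x y : L, d ⁅x, y⁆ = 0)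
    (hpw : ∀ x : L, d (pm.toFun x) = d x ^ p) : uEnv pm →ₐ[F] uEnv pm :=
  RingQuot.liftAlgHom F ⟨UniversalEnvelopingAlgebra.lift F (transLie pm d hbr), by
    rintro a b ⟨x, rfl, rfl⟩
    haveI := uEnv_charP pm
    rw [map_pow, UniversalEnvelopingAlgebra.lift_ι_apply,
      UniversalEnvelopingAlgebra.lift_ι_apply]
    show uIota pm (pm.toFun x) + algebraMap F (uEnv pm) (d (pm.toFun x)) =
      (uIota pm x + algebraMap F (uEnv pm) (d x)) ^ p
    rw [add_pow_char_of_commute _ (Algebra.commutes (d x) (uIota pm x)).symm,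
      uIota_pmap, hpw, map_pow]⟩

lemma transHom_uIota (d : L →ₗ[F] F) (hbr : ∀ x y : L, d ⁅x, y⁆ = 0)
    (hpw : ∀ x : L, d (pm.toFun x) = d x ^ p) (x : L) :
    transHom pm d hbr hpw (uIota pm x) = uIota pm x + algebraMap F (uEnv pm) (d x) := by
  show transHom pm d hbr hpw (RingQuot.mkAlgHom F (uRel pm) (ι F x)) = _
  have h1 : transHom pm d hbr hpw (RingQuot.mkAlgHom F (uRel pm) (ι F x)) =
      UniversalEnvelopingAlgebra.lift F (transLie pm d hbr) (ι F x) :=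
    RingQuot.liftAlgHom_mkAlgHom_apply _ _ _ _
  rw [h1, UniversalEnvelopingAlgebra.lift_ι_apply]
  rfl

lemma neg_hpw (d : L →ₗ[F] F) (hpw : ∀ x : L, d (pm.toFun x) = d x ^ p) (x : L) :
    (-d) (pm.toFun x) = (-d) x ^ p := by
  have : (-(d x)) ^ p = -(d x ^ p) := by
    rw [show -(d x) = 0 - d x by ring, sub_pow_char, zero_pow (Fact.out : p.Prime).ne_zero,
      zero_sub]
  simp [hpw, this]

/-- The translation automorphism of `u(L)` determined by `d`. -/
noncomputable def transEquiv (d : L →ₗ[F] F) (hbr : ∀ x y : L, d ⁅x, y⁆ = 0)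
    (hpw : ∀ x : L, d (pm.toFun x) = d x ^ p) : uEnv pm ≃ₐ[F] uEnv pm :=
  AlgEquiv.ofAlgHom (transHom pm d hbr hpw)
    (transHom pm (-d) (fun x y => by simp [hbr]) (neg_hpw pm d hpw))
    (uEnv_algHom_ext pm fun x => by
      simp [transHom_uIota, map_add, AlgHom.commutes, map_neg])
    (uEnv_algHom_ext pm fun x => by
      simp [transHom_uIota, map_add, AlgHom.commutes, map_neg])

lemma transEquiv_uIota (d : L →ₗ[F] F) (hbr : ∀ x y : L, d ⁅x, y⁆ = 0)
    (hpw : ∀ x : L, d (pm.toFun x) = d x ^ p) (x : L) :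
    transEquiv pm d hbr hpw (uIota pm x) = uIota pm x + algebraMap F (uEnv pm) (d x) :=
  transHom_uIota pm d hbr hpw x

end AuxLemmas

/-- if `φ : u(L) → u(H)` is an algebra isomorphism, then
`η : L → u(H)`, `η(x) = φ(x) − ε_H(φ(x))·1`, is a homomorphism of restricted Lie algebras
(where `u(H)` carries `[a,b] = ab − ba` and `a^{[p]} = a^p`), and its extension to an algebra
homomorphism `u(L) → u(H)` is an isomorphism carrying `ω(L)` onto `ω(H)`. -/
theorem eta_restricted_hom_and_extension (F : Type*) [Field F] (p : ℕ) [Fact p.Prime]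
    [CharP F p] (L H : Type*) [LieRing L] [LieAlgebra F L] [LieRing H] [LieAlgebra F H]
    (pmL : PMapOn F p L) (pmH : PMapOn F p H) (φ : uEnv pmL ≃ₐ[F] uEnv pmH) :

    let η : L → uEnv pmH := fun x => φ (uIota pmL x) -
      algebraMap F (uEnv pmH) (uAug pmH (Fact.out : p.Prime).ne_zero (φ (uIota pmL x)))
    (∀ (a : F) (x y : L), η (a • x + y) = a • η x + η y) ∧
    (∀ x y : L, η ⁅x, y⁆ = η x * η y - η y * η x) ∧
    (∀ x : L, η (pmL.toFun x) = (η x) ^ p) ∧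
    ∃ ψ : uEnv pmL ≃ₐ[F] uEnv pmH,
      (∀ x : L, ψ (uIota pmL x) = η x) ∧
      Submodule.map (ψ : uEnv pmL →ₗ[F] uEnv pmH)
          (uAugIdeal pmL (Fact.out : p.Prime).ne_zero) =
        uAugIdeal pmH (Fact.out : p.Prime).ne_zero := by
  intro η
  haveI := uEnv_charP pmH
  set hp : p ≠ 0 := (Fact.out : p.Prime).ne_zero with hhp
  set g : uEnv pmL →ₐ[F] F := (uAug pmH hp).comp φ.toAlgHom with hg
  set c : L →ₗ[F] F := g.toLinearMap ∘ₗ uIota pmL with hc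
  have hcx : ∀ x : L, c x = uAug pmH hp (φ (uIota pmL x)) := fun x => rfl
  have hηx : ∀ x : L, η x = φ (uIota pmL x) - algebraMap F (uEnv pmH) (c x) := fun x => rfl
  have hbr : ∀ x y : L, c ⁅x, y⁆ = 0 := fun x y => by
    rw [hcx]
    simp only [uIota_bracket, map_sub, map_mul]
    rw [show uAug pmH hp (φ (uIota pmL x)) * uAug pmH hp (φ (uIota pmL y)) =
      uAug pmH hp (φ (uIota pmL y)) * uAug pmH hp (φ (uIota pmL x)) from mul_comm _ _,
      sub_self]
  have hpw : ∀ x : L, c (pmL.toFun x) = c x ^ p := fun x => by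
    rw [hcx, hcx, uIota_pmap, map_pow, map_pow]
  have hcomm : ∀ (a : F) (u : uEnv pmH), Commute u (algebraMap F (uEnv pmH) a) :=
    fun a u => (Algebra.commutes a u).symm
  refine ⟨?_, ?_, ?_, ?_⟩
  · intro a x y
    have e1 : uIota pmL (a • x + y) = a • uIota pmL x + uIota pmL y := by simp
    rw [hηx, hηx, hηx, e1]
    simp only [map_add, map_smul, smul_eq_mul, map_mul, ← Algebra.smul_def, smul_sub]
    abel
  · intro x y
    rw [hηx, hηx, hηx, uIota_bracket, map_sub, map_mul, map_mul, hbr, map_zero, sub_zero]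
    rw [sub_mul, sub_mul, mul_sub, mul_sub, mul_sub, mul_sub,
      Algebra.commutes (c x) (φ (uIota pmL y)), Algebra.commutes (c y) (φ (uIota pmL x)),
      Algebra.commutes (c y) (algebraMap F (uEnv pmH) (c x))]
    abel
  · intro x
    rw [hηx, hηx, uIota_pmap, map_pow, hpw,
      sub_pow_char_of_commute _ (hcomm (c x) (φ (uIota pmL x))), map_pow]
  · refine ⟨(transEquiv pmL (-c) (fun x y => by simp [hbr]) (neg_hpw pmL c hpw)).trans φ,
      fun x => ?_, ?_⟩
    · rw [AlgEquiv.trans_apply, transEquiv_uIota, map_add, AlgEquiv.commutes, hηx]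
      simp [sub_eq_add_neg]
    · set ψ := (transEquiv pmL (-c) (fun x y => by simp [hbr]) (neg_hpw pmL c hpw)).trans φ
        with hψ
      have haug : uAug pmL hp = (uAug pmH hp).comp ψ.toAlgHom := by
        refine uEnv_algHom_ext pmL fun x => ?_
        rw [uAug_uIota]
        show (0 : F) = uAug pmH hp (ψ (uIota pmL x))
        rw [hψ, AlgEquiv.trans_apply, transEquiv_uIota, map_add, AlgEquiv.commutes,
          map_add, uAug_algebraMap, LinearMap.neg_apply, ← hcx]
        ring
      have hker : uAugIdeal pmL hp =
          Submodule.comap (ψ : uEnv pmL →ₗ[F] uEnv pmH) (uAugIdeal pmH hp) := by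
        ext a
        have := DFunLike.congr_fun haug a
        simp only [AlgHom.coe_comp, Function.comp_apply, AlgEquiv.coe_algHom] at this
        simp [uAugIdeal, LinearMap.mem_ker, this]
      rw [hker, Submodule.map_comap_eq_of_surjective]
      exact ψ.surjective
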